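/- Let A and B be finite types and let ρ be a density matrix on A × B whose reduced matrices ρ_A and ρ_B are both diagonal (so the standard basis is a local eigenbasis on each side). Define the local dephasing on A by Π_A(ρ) (i,j) (k,l) = if i = k then ρ (i,j) (k,l) else 0. Then C(ρ) = C(Π_A(ρ)) if and only if there exist non-negative reals p : A → ℝ with ∑_i p i = 1 and density matrices σ : A → Matrix B B ℂ such that ρ (i,j) (k,l) = if i = k then p i · (σ i) j l else 0 (i.e., ρ = ∑_i p i · E_{ii} ⊗ σ_i, a classical-quantum state with zero asymmetric quantum discord). -/

import Mathlib

open Matrix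
open scoped ComplexOrder

/-- The `l₁`-coherence of a matrix with respect to the standard basis:
the sum of the absolute values of all off-diagonal entries. -/
noncomputable def coh {ι : Type} [Fintype ι] [DecidableEq ι] (M : Matrix ι ι ℂ) : ℝ :=
  ∑ i, ∑ j, if i ≠ j then ‖M i j‖ else 0

lemma psd_diag_nonneg {n : Type} [Fintype n] [DecidableEq n] {M : Matrix n n ℂ}
    (hM : M.PosSemidef) (j : n) : 0 ≤ M j j := by
  have := hM.dotProduct_mulVec_nonneg (Pi.single j 1)
  simpa [dotProduct, Matrix.mulVec, Pi.single_apply] using this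

lemma psd_trace_zero {n : Type} [Fintype n] [DecidableEq n] {M : Matrix n n ℂ}
    (hM : M.PosSemidef) (h : M.trace = 0) : M = 0 := by
  obtain ⟨C, rfl⟩ : ∃ C : Matrix n n ℂ, M = Cᴴ * C := by
    open scoped MatrixOrder in
    obtain ⟨C, rfl⟩ := CStarAlgebra.nonneg_iff_eq_star_mul_self.mp hM.nonneg
    exact ⟨C, rfl⟩
  rw [Matrix.conjTranspose_mul_self_eq_zero]
  have htr : (Cᴴ * C).trace = ((∑ j, ∑ i, Complex.normSq (C i j) : ℝ) : ℂ) := by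
    push_cast
    simp only [Matrix.trace, Matrix.diag, Matrix.mul_apply, Matrix.conjTranspose_apply]
    congr 1; funext j; congr 1; funext i
    rw [Complex.star_def, ← Complex.normSq_eq_conj_mul_self]
  rw [htr, Complex.ofReal_eq_zero] at h
  have hz := (Finset.sum_eq_zero_iff_of_nonneg (fun j _ =>
    Finset.sum_nonneg fun i _ => Complex.normSq_nonneg _)).mp h
  ext i j
  have := (Finset.sum_eq_zero_iff_of_nonneg (fun i _ => Complex.normSq_nonneg _)).mp
    (hz j (Finset.mem_univ j)) i (Finset.mem_univ i)
  simpa using Complex.normSq_eq_zero.mp this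

lemma psd_smul_real {n : Type} [Fintype n] {M : Matrix n n ℂ}
    (hM : M.PosSemidef) {c : ℝ} (hc : 0 ≤ c) : ((c : ℂ) • M).PosSemidef := by
  apply Matrix.PosSemidef.of_dotProduct_mulVec_nonneg
  · unfold Matrix.IsHermitian
    rw [Matrix.conjTranspose_smul, hM.1, Complex.star_def, Complex.conj_ofReal]
  · intro x
    rw [Matrix.smul_mulVec, dotProduct_smul, smul_eq_mul]
    exact mul_nonneg (by exact_mod_cast Complex.zero_le_real.mpr hc) (hM.dotProduct_mulVec_nonneg x)

/-- For a bipartite state whose reduced states are diagonal in the reference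
bases, the coherence is unchanged by the local dephasing of `A` if and only
if the state is a classical-quantum state `∑ i, p i • E_{ii} ⊗ σ i`
(i.e. it has zero asymmetric quantum discord). -/
theorem stmt_5 {A B : Type} [Fintype A] [DecidableEq A] [Fintype B] [DecidableEq B]
    (ρ : Matrix (A × B) (A × B) ℂ) (hρ : ρ.PosSemidef) (htr : ρ.trace = 1)
    (hA : (Matrix.of fun i k : A => ∑ j : B, ρ (i, j) (k, j)).IsDiag)
    (hB : (Matrix.of fun j l : B => ∑ i : A, ρ (i, j) (i, l)).IsDiag) :
    coh ρ = coh (Matrix.of fun p q : A × B => if p.1 = q.1 then ρ p q else 0) ↔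
    (∃ (p : A → ℝ) (σ : A → Matrix B B ℂ),
      (∀ i, 0 ≤ p i) ∧ (∑ i, p i) = 1 ∧
      (∀ i, (σ i).PosSemidef ∧ (σ i).trace = 1) ∧
      ∀ i j k l, ρ (i, j) (k, l) = if i = k then (p i : ℂ) * σ i j l else 0) := by
  classical
  set D := (Matrix.of fun p q : A × B => if p.1 = q.1 then ρ p q else 0) with hD
  set S : ℝ := ∑ p : A × B, ∑ q : A × B, if p.1 ≠ q.1 then ‖ρ p q‖ else 0 with hSdef
  have hterm : ∀ p q : A × B,
      (if p ≠ q then ‖ρ p q‖ else 0) =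
      (if p ≠ q then ‖D p q‖ else 0) + (if p.1 ≠ q.1 then ‖ρ p q‖ else 0) := by
    intro p q
    by_cases h1 : p.1 = q.1
    · simp [hD, h1]
    · have hpq : p ≠ q := fun e => h1 (by rw [e])
      simp [hD, h1, hpq]
  have hsplit : coh ρ = coh D + S := by
    simp only [coh, hSdef, hterm, Finset.sum_add_distrib]
  have hkey : coh ρ = coh D ↔ ∀ p q : A × B, p.1 ≠ q.1 → ρ p q = 0 := by
    rw [hsplit, add_eq_left, hSdef]
    rw [Finset.sum_eq_zero_iff_of_nonneg (fun p _ => Finset.sum_nonneg fun q _ => by positivity)]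
    constructor
    · intro h p q hpq
      have h2 := (Finset.sum_eq_zero_iff_of_nonneg (fun q _ => by positivity)).mp
        (h p (Finset.mem_univ p)) q (Finset.mem_univ q)
      rw [if_pos hpq] at h2
      exact norm_eq_zero.mp h2
    · intro h p _
      apply Finset.sum_eq_zero
      intro q _
      by_cases hpq : p.1 = q.1
      · simp [hpq]
      · simp [hpq, h p q hpq]
  rw [hkey]
  constructor
  · intro h
    -- B is nonempty
    have hBne : Nonempty B := by
      rcases isEmpty_or_nonempty B with hE | hne
      · exfalso
        rw [Matrix.trace_eq_zero_of_isEmpty ρ] at htr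
        exact zero_ne_one htr
      · exact hne
    set T : A → Matrix B B ℂ := fun i => Matrix.of fun j l => ρ (i, j) (i, l) with hTdef
    have hT : ∀ i, (T i).PosSemidef := fun i => hρ.submatrix (fun j : B => (i, j))
    have hTnn : ∀ i, 0 ≤ (T i).trace := fun i =>
      Finset.sum_nonneg fun j _ => psd_diag_nonneg (hT i) j
    set p : A → ℝ := fun i => ((T i).trace).re with hpdef
    have hpnn : ∀ i, 0 ≤ p i := fun i => by
      have := (Complex.le_def.mp (hTnn i)).1
      simpa [hpdef] using this
    have hTre : ∀ i, (T i).trace = ((p i : ℝ) : ℂ) := fun i => by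
      have him := (Complex.le_def.mp (hTnn i)).2
      apply Complex.ext
      · simp [hpdef]
      · simp [hpdef, ← him]
    have hsum : ∑ i, p i = 1 := by
      have h1 : ρ.trace = ∑ i, (T i).trace := by
        simp [Matrix.trace, Matrix.diag, Fintype.sum_prod_type, hTdef]
      rw [htr] at h1
      have h2 : ((∑ i, p i : ℝ) : ℂ) = 1 := by
        push_cast
        rw [← Finset.sum_congr rfl fun i _ => hTre i]
        exact h1.symm
      exact_mod_cast h2
    set σ : A → Matrix B B ℂ := fun i =>
      if p i = 0 then ((Fintype.card B : ℂ))⁻¹ • (1 : Matrix B B ℂ)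
      else ((p i : ℂ))⁻¹ • T i with hσdef
    have hcardB : (Fintype.card B : ℂ) ≠ 0 := by
      exact_mod_cast Fintype.card_ne_zero (α := B)
    refine ⟨p, σ, hpnn, hsum, ?_, ?_⟩
    · intro i
      by_cases hz : p i = 0
      · constructor
        · rw [hσdef]; simp only [if_pos hz]
          have : ((Fintype.card B : ℂ))⁻¹ • (1 : Matrix B B ℂ)
              = (((Fintype.card B : ℝ)⁻¹ : ℝ) : ℂ) • (1 : Matrix B B ℂ) := by
            push_cast; rfl
          rw [this]
          exact psd_smul_real Matrix.PosSemidef.one (by positivity)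
        · rw [hσdef]; simp only [if_pos hz]
          rw [Matrix.trace_smul, Matrix.trace_one, smul_eq_mul]
          exact inv_mul_cancel₀ hcardB
      · constructor
        · rw [hσdef]; simp only [if_neg hz]
          have : ((p i : ℂ))⁻¹ • T i = (((p i)⁻¹ : ℝ) : ℂ) • T i := by push_cast; rfl
          rw [this]
          exact psd_smul_real (hT i) (inv_nonneg.mpr (hpnn i))
        · rw [hσdef]; simp only [if_neg hz]
          rw [Matrix.trace_smul, smul_eq_mul, hTre i]
          exact inv_mul_cancel₀ (by exact_mod_cast hz)
    · intro i j k l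
      by_cases hik : i = k
      · subst hik
        rw [if_pos rfl]
        by_cases hz : p i = 0
        · have hT0 : T i = 0 := by
            apply psd_trace_zero (hT i)
            rw [hTre i, hz]; simp
          have : ρ (i, j) (i, l) = T i j l := rfl
          rw [this, hT0, hz]
          simp
        · rw [hσdef]; simp only [if_neg hz]
          have : ρ (i, j) (i, l) = T i j l := rfl
          rw [this]
          simp only [Matrix.smul_apply, smul_eq_mul, ← mul_assoc]
          rw [mul_inv_cancel₀ (by exact_mod_cast hz), one_mul]
      · rw [if_neg hik]
        exact h (i, j) (k, l) hik
  · rintro ⟨p, σ, hp0, hps, hpd, hf⟩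
    rintro ⟨i, j⟩ ⟨k, l⟩ hne
    rw [hf i j k l, if_neg hne]
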